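/- Let N be a squarefree positive integer, p a prime not dividing N, k ≥ 2 an integer, and f a positive integer. Write 𝟙_N for the indicator of being coprime to N, and let χ : ℕ → {−1,0,1} be a completely multiplicative function. Then ∑_{g ∣ f} 𝟙_N(g) μ(g) χ(g) g^{k−2} ∑_{h ∣ (f/g)} 𝟙_N(h) h^{2k−3} = ( ∑_{g ∣ f} 𝟙_{Np}(g) μ(g) χ(g) g^{k−2} ∑_{h ∣ (f/g)} 𝟙_{Np}(h) h^{2k−3} ) · ( ∑_{j=0}^{v} p^{j(2k−3)} − χ(p) p^{k−2} ∑_{j=0}^{v−1} p^{j(2k−3)} ), where v = ord_p(f). -/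

import Mathlib

open ArithmeticFunction Finset

namespace Stmt13Aux

def U (N k : ℕ) (χ : ℕ → ℤ) : ArithmeticFunction ℤ :=
  ⟨fun n => if Nat.Coprime n N then (moebius n : ℤ) * χ n * (n : ℤ) ^ (k - 2) else 0, by simp⟩

def W (N k : ℕ) (hk : 2 ≤ k) : ArithmeticFunction ℤ :=
  ⟨fun n => if Nat.Coprime n N then (n : ℤ) ^ (2 * k - 3) else 0, by
    have h : 2 * k - 3 ≠ 0 := by omega
    simp [zero_pow h]⟩

@[simp] lemma U_apply (N k : ℕ) (χ : ℕ → ℤ) (n : ℕ) :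
    U N k χ n = if Nat.Coprime n N then (moebius n : ℤ) * χ n * (n : ℤ) ^ (k - 2) else 0 := rfl

@[simp] lemma W_apply (N k : ℕ) (hk : 2 ≤ k) (n : ℕ) :
    W N k hk n = if Nat.Coprime n N then (n : ℤ) ^ (2 * k - 3) else 0 := rfl

lemma U_isMult (N k : ℕ) (χ : ℕ → ℤ) (hχ1 : χ 1 = 1) (hχm : ∀ m n, χ (m * n) = χ m * χ n) :
    (U N k χ).IsMultiplicative := by
  constructor
  · simp [hχ1, Nat.coprime_one_left]
  · intro m n hmn
    simp only [U_apply, Nat.coprime_mul_iff_left]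
    by_cases h1 : Nat.Coprime m N
    · by_cases h2 : Nat.Coprime n N
      · rw [if_pos ⟨h1, h2⟩, if_pos h1, if_pos h2,
          isMultiplicative_moebius.map_mul_of_coprime hmn, hχm, Nat.cast_mul, mul_pow]
        push_cast
        ring
      · rw [if_neg (by tauto), if_neg h2, mul_zero]
    · rw [if_neg (by tauto), if_neg h1, zero_mul]

lemma W_isMult (N k : ℕ) (hk : 2 ≤ k) : (W N k hk).IsMultiplicative := by
  constructor
  · simp [Nat.coprime_one_left]
  · intro m n hmn
    simp only [W_apply, Nat.coprime_mul_iff_left]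
    by_cases h1 : Nat.Coprime m N
    · by_cases h2 : Nat.Coprime n N
      · rw [if_pos ⟨h1, h2⟩, if_pos h1, if_pos h2, Nat.cast_mul, mul_pow]
      · rw [if_neg (by tauto), if_neg h2, mul_zero]
    · rw [if_neg (by tauto), if_neg h1, zero_mul]

def A (N k : ℕ) (hk : 2 ≤ k) (χ : ℕ → ℤ) : ArithmeticFunction ℤ :=
  U N k χ * (W N k hk * zeta)

lemma A_isMult (N k : ℕ) (hk : 2 ≤ k) (χ : ℕ → ℤ) (hχ1 : χ 1 = 1)
    (hχm : ∀ m n, χ (m * n) = χ m * χ n) : (A N k hk χ).IsMultiplicative :=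
  (U_isMult N k χ hχ1 hχm).mul ((W_isMult N k hk).mul isMultiplicative_zeta.natCast)

lemma A_apply (N k : ℕ) (hk : 2 ≤ k) (χ : ℕ → ℤ) (n : ℕ) :
    A N k hk χ n = ∑ g ∈ n.divisors, U N k χ g * ∑ h ∈ (n / g).divisors, W N k hk h := by
  rw [A, mul_apply, Nat.sum_divisorsAntidiagonal (fun a b => U N k χ a * (W N k hk * zeta) b)]
  refine Finset.sum_congr rfl fun g _ => ?_
  rw [coe_mul_zeta_apply]

lemma A_eq_sum (N k : ℕ) (hk : 2 ≤ k) (χ : ℕ → ℤ) (n : ℕ) :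
    (∑ g ∈ n.divisors, (if Nat.Coprime g N then (1 : ℤ) else 0) * moebius g * χ g *
        (g : ℤ) ^ (k - 2) *
        ∑ h ∈ (n / g).divisors,
          (if Nat.Coprime h N then (1 : ℤ) else 0) * (h : ℤ) ^ (2 * k - 3)) =
      A N k hk χ n := by
  rw [A_apply]
  refine Finset.sum_congr rfl fun g _ => ?_
  have hin : ∀ d : ℕ, (∑ h ∈ d.divisors,
      (if Nat.Coprime h N then (1 : ℤ) else 0) * (h : ℤ) ^ (2 * k - 3)) =
      ∑ h ∈ d.divisors, W N k hk h := by
    intro d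
    refine Finset.sum_congr rfl fun h _ => ?_
    by_cases hc : Nat.Coprime h N <;> simp [hc]
  rw [hin]
  by_cases hc : Nat.Coprime g N <;> simp [hc]

end Stmt13Aux

namespace Stmt13Aux

lemma Wsum_prime_pow {N p k : ℕ} (hk : 2 ≤ k) (hp : p.Prime) (hpN : ¬ p ∣ N) (v : ℕ) :
    (∑ h ∈ (p ^ v).divisors, W N k hk h) =
      ∑ j ∈ Finset.range (v + 1), (p : ℤ) ^ (j * (2 * k - 3)) := by
  rw [Nat.sum_divisors_prime_pow hp]
  refine Finset.sum_congr rfl fun j _ => ?_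
  have hc : Nat.Coprime (p ^ j) N := Nat.Coprime.pow_left _ ((hp.coprime_iff_not_dvd).mpr hpN)
  rw [W_apply, if_pos hc]
  push_cast
  rw [← pow_mul]

lemma not_coprime_pp {N p : ℕ} (hp : p.Prime) (i : ℕ) :
    ¬ Nat.Coprime (p ^ (i + 1)) (N * p) := fun hc =>
  (hp.coprime_iff_not_dvd.mp
    (Nat.Coprime.coprime_dvd_left (dvd_pow_self p (Nat.succ_ne_zero i)) hc))
    (dvd_mul_left p N)

lemma Wsum_prime_pow_np {N p k : ℕ} (hk : 2 ≤ k) (hp : p.Prime) (v : ℕ) :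
    (∑ h ∈ (p ^ v).divisors, W (N * p) k hk h) = 1 := by
  rw [Nat.sum_divisors_prime_pow hp, Finset.sum_range_succ']
  have h0 : ∀ i ∈ Finset.range v, W (N * p) k hk (p ^ (i + 1)) = 0 := fun i _ => by
    rw [W_apply, if_neg (not_coprime_pp hp i)]
  rw [Finset.sum_congr rfl h0]
  simp [Nat.coprime_one_left]

lemma A_prime_pow_np {N p k : ℕ} (hk : 2 ≤ k) (hp : p.Prime) (χ : ℕ → ℤ) (hχ1 : χ 1 = 1)
    (v : ℕ) : A (N * p) k hk χ (p ^ v) = 1 := by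
  rw [A_apply, Nat.sum_divisors_prime_pow hp, Finset.sum_range_succ']
  have h0 : ∀ i ∈ Finset.range v,
      U (N * p) k χ (p ^ (i + 1)) * (∑ h ∈ (p ^ v / p ^ (i + 1)).divisors, W (N * p) k hk h)
        = 0 := fun i _ => by
    rw [U_apply, if_neg (not_coprime_pp hp i), zero_mul]
  rw [Finset.sum_congr rfl h0]
  simp only [Finset.sum_const_zero, zero_add, pow_zero, Nat.div_one]
  have h1 : p ^ v / 1 = p ^ v := Nat.div_one _
  rw [Wsum_prime_pow_np hk hp]
  simp [hχ1, Nat.coprime_one_left]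

lemma A_prime_pow {N p k : ℕ} (hk : 2 ≤ k) (hp : p.Prime) (hpN : ¬ p ∣ N) (χ : ℕ → ℤ)
    (hχ1 : χ 1 = 1) (v : ℕ) :
    A N k hk χ (p ^ v) =
      (∑ j ∈ Finset.range (v + 1), (p : ℤ) ^ (j * (2 * k - 3))) -
        χ p * (p : ℤ) ^ (k - 2) * ∑ j ∈ Finset.range v, (p : ℤ) ^ (j * (2 * k - 3)) := by
  rw [A_apply, Nat.sum_divisors_prime_pow hp]
  have hU1 : U N k χ (p ^ 0) = 1 := by simp [hχ1, Nat.coprime_one_left]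
  rcases Nat.eq_zero_or_pos v with rfl | hv
  · rw [zero_add, Finset.range_one, Finset.sum_singleton, hU1, one_mul]
    have h00 : p ^ 0 / p ^ 0 = p ^ 0 := by simp
    rw [h00, Wsum_prime_pow hk hp hpN]
    simp
  · obtain ⟨s, rfl⟩ : ∃ s, v = s + 1 := ⟨v - 1, by omega⟩
    rw [Finset.sum_range_succ', Finset.sum_range_succ']
    have h0 : ∀ i ∈ Finset.range s,
        U N k χ (p ^ (i + 1 + 1)) *
          (∑ h ∈ (p ^ (s + 1) / p ^ (i + 1 + 1)).divisors, W N k hk h) = 0 := fun i _ => by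
      have hm : moebius (p ^ (i + 1 + 1)) = 0 := by
        rw [moebius_apply_prime_pow hp (Nat.succ_ne_zero _)]
        simp
      rw [U_apply, hm]
      simp
    rw [Finset.sum_congr rfl h0]
    have hUp : U N k χ (p ^ 1) = -(χ p * (p : ℤ) ^ (k - 2)) := by
      rw [U_apply, pow_one, if_pos ((hp.coprime_iff_not_dvd).mpr hpN),
        moebius_apply_prime hp]
      ring
    have hd1 : p ^ (s + 1) / p ^ 1 = p ^ s := by
      rw [Nat.pow_div (by omega) hp.pos, Nat.add_sub_cancel]
    have hd0 : p ^ (s + 1) / p ^ 0 = p ^ (s + 1) := by simp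
    rw [hd1, hd0, hU1, hUp, Wsum_prime_pow hk hp hpN, Wsum_prime_pow hk hp hpN]
    simp only [Finset.sum_const_zero]
    ring

lemma A_congr {N p k : ℕ} (hk : 2 ≤ k) (hp : p.Prime) (χ : ℕ → ℤ) {n : ℕ}
    (hpn : ¬ p ∣ n) : A N k hk χ n = A (N * p) k hk χ n := by
  rw [A_apply, A_apply]
  refine Finset.sum_congr rfl fun g hg => ?_
  have hgn : g ∣ n := (Nat.mem_divisors.mp hg).1
  have hiff : ∀ d : ℕ, d ∣ n → (Nat.Coprime d (N * p) ↔ Nat.Coprime d N) := fun d hd => by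
    rw [Nat.coprime_mul_iff_right]
    exact and_iff_left ((hp.coprime_iff_not_dvd).mpr fun h => hpn (h.trans hd)).symm
  congr 1
  · rw [U_apply, U_apply, if_congr (hiff g hgn) rfl rfl]
  · refine Finset.sum_congr rfl fun h hh => ?_
    have hhn : h ∣ n := (Nat.mem_divisors.mp hh).1.trans (Nat.div_dvd_of_dvd hgn)
    rw [W_apply, W_apply, if_congr (hiff h hhn) rfl rfl]

end Stmt13Aux

open ArithmeticFunction in
/-- Lemma 3.2 (combinatorial content): H_N(M) = H_{Np}(M) · C_{p,D}(ord_p f) at the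
level of twisted double divisor sums. -/
theorem stmt_13 (N p k f : ℕ) (hN : Squarefree N) (hN0 : 0 < N) (hp : p.Prime)
    (hpN : ¬ p ∣ N) (hk : 2 ≤ k) (hf : 0 < f) (χ : ℕ → ℤ) (hχ1 : χ 1 = 1)
    (hχm : ∀ m n, χ (m * n) = χ m * χ n) (hχv : ∀ n, χ n = -1 ∨ χ n = 0 ∨ χ n = 1) :
    (∑ g ∈ f.divisors, (if Nat.Coprime g N then (1 : ℤ) else 0) * moebius g * χ g *
        (g : ℤ) ^ (k - 2) *
        ∑ h ∈ (f / g).divisors, (if Nat.Coprime h N then (1 : ℤ) else 0) * (h : ℤ) ^ (2 * k - 3)) =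
      (∑ g ∈ f.divisors, (if Nat.Coprime g (N * p) then (1 : ℤ) else 0) * moebius g * χ g *
          (g : ℤ) ^ (k - 2) *
          ∑ h ∈ (f / g).divisors,
            (if Nat.Coprime h (N * p) then (1 : ℤ) else 0) * (h : ℤ) ^ (2 * k - 3)) *
        ((∑ j ∈ Finset.range (f.factorization p + 1), (p : ℤ) ^ (j * (2 * k - 3))) -
          χ p * (p : ℤ) ^ (k - 2) *
            ∑ j ∈ Finset.range (f.factorization p), (p : ℤ) ^ (j * (2 * k - 3))) := by
  classical
  set v := f.factorization p with hv
  set m := ordCompl[p] f with hm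
  have hfm : p ^ v * m = f := Nat.ordProj_mul_ordCompl_eq_self f p
  have hcop : Nat.Coprime (p ^ v) m :=
    Nat.Coprime.pow_left _ (Nat.coprime_ordCompl hp hf.ne')
  have hpm : ¬ p ∣ m := Nat.not_dvd_ordCompl hp hf.ne'
  have hA := Stmt13Aux.A_isMult N k hk χ hχ1 hχm
  have hB := Stmt13Aux.A_isMult (N * p) k hk χ hχ1 hχm
  rw [Stmt13Aux.A_eq_sum N k hk χ f, Stmt13Aux.A_eq_sum (N * p) k hk χ f, ← hfm,
    hA.map_mul_of_coprime hcop, hB.map_mul_of_coprime hcop,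
    Stmt13Aux.A_prime_pow hk hp hpN χ hχ1 v,
    Stmt13Aux.A_prime_pow_np hk hp χ hχ1 v,
    Stmt13Aux.A_congr hk hp χ hpm (N := N)]
  ring
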